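/- Let A = (a_{rs})_{3×3}, b = (b_1, b_2, b_3) be real with b_1 + b_2 + b_3 = 1 and ∑_r b_r(a_{r1} + a_{r2} + a_{r3}) = 1/2. If additionally a_{11} + a_{22} + a_{33} = 1/2 and 2D = S hold (where D = a_{11}a_{22}a_{33} + a_{12}a_{23}a_{31} + a_{21}a_{32}a_{13} − a_{11}a_{23}a_{32} − a_{22}a_{31}a_{13} − a_{33}a_{12}a_{21} and S = (a_{22}a_{33} + a_{12}a_{23} + a_{13}a_{32} − a_{23}a_{32} − a_{12}a_{33} − a_{13}a_{22})b_1 + (a_{33}a_{11} + a_{23}a_{31} + a_{21}a_{13} − a_{31}a_{13} − a_{23}a_{11} − a_{21}a_{33})b_2 + (a_{11}a_{22} + a_{31}a_{12} + a_{32}a_{21} − a_{12}a_{21} − a_{31}a_{22} − a_{32}a_{11})b_3), then |G_{N,3}(σ)| = 1 for every real σ with I_3 − iσA invertible. -/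

import Mathlib

open Matrix

set_option maxHeartbeats 2000000 in
/-- A three-stage, at least second-order accurate,
Runge–Kutta scheme with `tr A = 1/2` and `2D = S` has amplification factor of
unit modulus: `|G_{N,3}(σ)| = 1` for every real `σ` with `I₃ − iσA`
invertible (minimal dissipation). -/
theorem three_stage_minimal_dissipation
    (a11 a12 a13 a21 a22 a23 a31 a32 a33 b1 b2 b3 : ℝ)
    (h1 : b1 + b2 + b3 = 1)
    (h2 : b1 * (a11 + a12 + a13) + b2 * (a21 + a22 + a23)
        + b3 * (a31 + a32 + a33) = 1 / 2)
    (htr : a11 + a22 + a33 = 1 / 2)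
    (D S : ℝ)
    (hD : D = a11 * a22 * a33 + a12 * a23 * a31 + a21 * a32 * a13
        - a11 * a23 * a32 - a22 * a31 * a13 - a33 * a12 * a21)
    (hS : S = (a22 * a33 + a12 * a23 + a13 * a32
          - a23 * a32 - a12 * a33 - a13 * a22) * b1
        + (a33 * a11 + a23 * a31 + a21 * a13
          - a31 * a13 - a23 * a11 - a21 * a33) * b2
        + (a11 * a22 + a31 * a12 + a32 * a21
          - a12 * a21 - a31 * a22 - a32 * a11) * b3)
    (hDS : 2 * D = S) :
    ∀ σ : ℝ,
      IsUnit ((1 : Matrix (Fin 3) (Fin 3) ℂ) - (Complex.I * (σ : ℂ)) •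
        !![(a11 : ℂ), a12, a13; a21, a22, a23; a31, a32, a33]) →
      ‖1 + Complex.I * (σ : ℂ) *
          (![(b1 : ℂ), (b2 : ℂ), (b3 : ℂ)] ⬝ᵥ
            (((1 : Matrix (Fin 3) (Fin 3) ℂ) - (Complex.I * (σ : ℂ)) •
              !![(a11 : ℂ), a12, a13; a21, a22, a23; a31, a32, a33])⁻¹
                *ᵥ ![1, 1, 1]))‖ = 1 := by
  intro σ hinv
  have key : (a22 * a33 + a12 * a23 + a13 * a32
          - a23 * a32 - a12 * a33 - a13 * a22) * b1
        + (a33 * a11 + a23 * a31 + a21 * a13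
          - a31 * a13 - a23 * a11 - a21 * a33) * b2
        + (a11 * a22 + a31 * a12 + a32 * a21
          - a12 * a21 - a31 * a22 - a32 * a11) * b3
      = 2 * (a11 * a22 * a33 + a12 * a23 * a31 + a21 * a32 * a13
        - a11 * a23 * a32 - a22 * a31 * a13 - a33 * a12 * a21) := by
    rw [← hS, ← hD]; exact hDS.symm
  set z : ℂ := Complex.I * σ with hz
  set M : Matrix (Fin 3) (Fin 3) ℂ :=
    (1 : Matrix (Fin 3) (Fin 3) ℂ) - z • !![(a11 : ℂ), a12, a13; a21, a22, a23; a31, a32, a33] with hM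
  have hMe : M = !![1 - z*a11, -(z*a12), -(z*a13);
      -(z*a21), 1 - z*a22, -(z*a23);
      -(z*a31), -(z*a32), 1 - z*a33] := by
    rw [hM, Matrix.one_fin_three]
    ext i j
    fin_cases i <;> fin_cases j <;> simp [Matrix.vecHead, Matrix.vecTail]
  have hdne : M.det ≠ 0 := ((Matrix.isUnit_iff_isUnit_det M).mp hinv).ne_zero
  set m2 : ℝ := a11*a22 - a12*a21 + a11*a33 - a13*a31 + a22*a33 - a23*a32 with hm2
  have hdet : M.det = ((1 - σ^2*m2 : ℝ) : ℂ) + ((σ^3*D - σ/2 : ℝ) : ℂ) * Complex.I := by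
    rw [hMe, Matrix.det_fin_three]
    rw [hz]
    apply Complex.ext
    · simp [Complex.add_re, Complex.add_im, Complex.mul_re, Complex.mul_im, hm2, hD]
      ring_nf
      simp only [← Complex.ofReal_pow, Complex.ofReal_re, Complex.ofReal_im]
      ring
    · simp [Complex.add_re, Complex.add_im, Complex.mul_re, Complex.mul_im, hm2, hD]
      ring_nf
      simp only [← Complex.ofReal_pow, Complex.ofReal_re, Complex.ofReal_im]
      linear_combination (-σ) * htr
  have hnum : M.det + z * (![(b1:ℂ), b2, b3] ⬝ᵥ (M.adjugate *ᵥ ![1,1,1]))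
      = ((1 - σ^2*m2 : ℝ) : ℂ) - ((σ^3*D - σ/2 : ℝ) : ℂ) * Complex.I := by
    rw [hMe, Matrix.det_fin_three, Matrix.adjugate_fin_three]
    rw [hz]
    apply Complex.ext
    · simp [dotProduct, Matrix.mulVec, Fin.sum_univ_three,
        Complex.add_re, Complex.add_im, Complex.mul_re, Complex.mul_im, hm2, hD]
      ring_nf
      simp only [← Complex.ofReal_pow, Complex.ofReal_re, Complex.ofReal_im]
      linear_combination (σ^2*(b1+b2+b3)) * htr - σ^2 * h2 + (σ^2/2) * h1
    · simp [dotProduct, Matrix.mulVec, Fin.sum_univ_three,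
        Complex.add_re, Complex.add_im, Complex.mul_re, Complex.mul_im, hm2, hD]
      ring_nf
      simp only [← Complex.ofReal_pow, Complex.ofReal_re, Complex.ofReal_im]
      linear_combination σ * h1 - σ * htr - σ^3 * key
  have hconj : (starRingEnd ℂ) M.det
      = ((1 - σ^2*m2 : ℝ) : ℂ) - ((σ^3*D - σ/2 : ℝ) : ℂ) * Complex.I := by
    rw [hdet, map_add, _root_.map_mul, Complex.conj_ofReal, Complex.conj_ofReal, Complex.conj_I]
    ring
  have hinvM : M⁻¹ = (M.det)⁻¹ • M.adjugate := by
    rw [Matrix.inv_def, Ring.inverse_eq_inv']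
  have hE : 1 + z * (![(b1:ℂ), b2, b3] ⬝ᵥ (M⁻¹ *ᵥ ![1,1,1]))
      = (starRingEnd ℂ) M.det / M.det := by
    rw [hinvM, Matrix.smul_mulVec, dotProduct_smul, hconj, ← hnum, smul_eq_mul]
    field_simp
  rw [hE, norm_div, Complex.norm_conj, div_self]
  exact norm_ne_zero_iff.mpr hdne
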